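/- For Y = aX + b with a > 0, b ≥ 0, the past varentropies satisfy V(_tY) = V(_{(t-b)/a}X) for all admissible t; in particular past varentropy is invariant under positive affine transformations. -/

import Mathlib

open Real MeasureTheory

lemma logsq_expand (c F0 y : ℝ) (hc : 0 < c) (hF : 0 < F0) :
    (c*y)/F0 * (Real.log ((c*y)/F0))^2
      = (c/F0) * (y*(Real.log y)^2
          - 2*(Real.log F0 - Real.log c)*(y*Real.log y)
          + (Real.log F0 - Real.log c)^2*y) := by
  rcases eq_or_ne y 0 with hy | hy
  · simp [hy]
  · rw [Real.log_div (by positivity) hF.ne', Real.log_mul hc.ne' hy]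
    ring

lemma logone_expand (c F0 y : ℝ) (hc : 0 < c) (hF : 0 < F0) :
    (c*y)/F0 * Real.log ((c*y)/F0)
      = (c/F0) * (y*Real.log y - (Real.log F0 - Real.log c)*y) := by
  rcases eq_or_ne y 0 with hy | hy
  · simp [hy]
  · rw [Real.log_div (by positivity) hF.ne', Real.log_mul hc.ne' hy]
    ring

/-- For `Y = aX + b` with `a > 0`, `b ≥ 0`, the past varentropies satisfy
`V(_tY) = V(_{(t-b)/a}X)`: past varentropy is invariant under positive affine
transformations. -/
theorem past_varentropy_affine (f F : ℝ → ℝ) (a b t : ℝ) (ha : 0 < a) (hb : 0 ≤ b)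
    (hf0 : ∀ x ≤ (0:ℝ), f x = 0) (hfnn : ∀ x, 0 ≤ f x)
    (hts : 0 < (t - b) / a) (hFpos : 0 < F ((t - b) / a))
    (hcdf : (∫ x in (0:ℝ)..((t - b) / a), f x) = F ((t - b) / a))
    (hflogf : IntervalIntegrable (fun x => f x * Real.log (f x)) volume 0 ((t - b) / a))
    (hflogf2 : IntervalIntegrable (fun x => f x * (Real.log (f x))^2) volume 0 ((t - b) / a)) :
    (∫ x in (0:ℝ)..t,
        ((1/a) * f ((x - b) / a)) / F ((t - b) / a)
          * (Real.log (((1/a) * f ((x - b) / a)) / F ((t - b) / a)))^2)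
      - (∫ x in (0:ℝ)..t,
        ((1/a) * f ((x - b) / a)) / F ((t - b) / a)
          * Real.log (((1/a) * f ((x - b) / a)) / F ((t - b) / a)))^2
    = (∫ x in (0:ℝ)..((t - b) / a),
        f x / F ((t - b) / a) * (Real.log (f x / F ((t - b) / a)))^2)
      - (∫ x in (0:ℝ)..((t - b) / a),
        f x / F ((t - b) / a) * Real.log (f x / F ((t - b) / a)))^2 := by
  set s : ℝ := (t - b) / a with hs
  set F0 : ℝ := F s with hF0
  -- integrability of f on [0,s]
  have hfint : IntervalIntegrable f volume 0 s := by
    by_contra h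
    rw [intervalIntegral.integral_undef h] at hcdf
    exact absurd hcdf.symm hFpos.ne'
  set A : ℝ := ∫ x in (0:ℝ)..s, f x * (Real.log (f x))^2 with hA
  set B : ℝ := ∫ x in (0:ℝ)..s, f x * Real.log (f x) with hB
  -- quadratic combination
  have keyint2 : ∀ K : ℝ, IntervalIntegrable
      (fun x => f x * (Real.log (f x))^2 - 2*K*(f x * Real.log (f x)) + K^2*(f x))
      volume 0 s :=
    fun K => (hflogf2.sub (hflogf.const_mul (2*K))).add (hfint.const_mul (K^2))
  have keyval2 : ∀ K : ℝ, (∫ x in (0:ℝ)..s,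
      (f x * (Real.log (f x))^2 - 2*K*(f x * Real.log (f x)) + K^2*(f x)))
      = A - 2*K*B + K^2*F0 := by
    intro K
    rw [intervalIntegral.integral_add (hflogf2.sub (hflogf.const_mul (2*K)))
        (hfint.const_mul (K^2)),
      intervalIntegral.integral_sub hflogf2 (hflogf.const_mul (2*K)),
      intervalIntegral.integral_const_mul, intervalIntegral.integral_const_mul, hcdf]
  have keyint1 : ∀ K : ℝ, IntervalIntegrable
      (fun x => f x * Real.log (f x) - K*(f x)) volume 0 s :=
    fun K => hflogf.sub (hfint.const_mul K)
  have keyval1 : ∀ K : ℝ, (∫ x in (0:ℝ)..s,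
      (f x * Real.log (f x) - K*(f x))) = B - K*F0 := by
    intro K
    rw [intervalIntegral.integral_sub hflogf (hfint.const_mul K),
      intervalIntegral.integral_const_mul, hcdf]
  -- vanishing on [-b/a, 0]
  have hba : -(b/a) ≤ 0 := neg_nonpos.2 (by positivity)
  have hzero : ∀ (G : ℝ → ℝ), (∀ x ≤ (0:ℝ), G x = 0) →
      IntervalIntegrable G volume (-(b/a)) 0 ∧ (∫ x in (-(b/a))..(0:ℝ), G x) = 0 := by
    intro G hG
    constructor
    · refine (intervalIntegrable_const (c := (0:ℝ))).congr_ae ?_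
      refine (ae_restrict_iff' measurableSet_uIoc).2 (Filter.Eventually.of_forall ?_)
      intro x hx
      rw [Set.uIoc_of_le hba] at hx
      exact (hG x hx.2).symm
    · rw [intervalIntegral.integral_congr (g := fun _ => (0:ℝ))
        (fun x hx => by
          rw [Set.uIcc_of_le hba] at hx
          exact hG x hx.2)]
      simp
  -- transfer: integral over 0..t of G((x-b)/a) equals a * integral over 0..s of G
  have transfer : ∀ (G : ℝ → ℝ), (∀ x ≤ (0:ℝ), G x = 0) →
      IntervalIntegrable G volume 0 s →
      (∫ x in (0:ℝ)..t, G ((x - b) / a)) = a * ∫ x in (0:ℝ)..s, G x := by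
    intro G hG hGint
    have h1 : (∫ x in (0:ℝ)..t, G ((x - b) / a)) = ∫ x in (0:ℝ)..t, G (x / a - b / a) := by
      refine intervalIntegral.integral_congr fun x _ => ?_
      rw [sub_div]
    rw [h1, intervalIntegral.integral_comp_div_sub G ha.ne' (b/a)]
    have h2 : (0:ℝ) / a - b / a = -(b/a) := by ring
    have h3 : t / a - b / a = s := by rw [hs]; ring
    rw [h2, h3, smul_eq_mul]
    obtain ⟨hi0, hv0⟩ := hzero G hG
    rw [← intervalIntegral.integral_add_adjacent_intervals hi0 hGint, hv0, zero_add]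
  -- rewrite LHS integrals
  set K1 : ℝ := Real.log F0 - Real.log (1/a) with hK1
  set K0 : ℝ := Real.log F0 - Real.log 1 with hK0
  have ha1 : (0:ℝ) < 1/a := by positivity
  have e2 : (∫ x in (0:ℝ)..t,
      ((1/a) * f ((x - b) / a)) / F0 * (Real.log (((1/a) * f ((x - b) / a)) / F0))^2)
      = (1/a/F0) * (a * (A - 2*K1*B + K1^2*F0)) := by
    have := transfer (fun y => f y * (Real.log (f y))^2 - 2*K1*(f y * Real.log (f y)) + K1^2*(f y))
      (fun y hy => by simp [hf0 y hy]) (keyint2 K1)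
    calc (∫ x in (0:ℝ)..t,
        ((1/a) * f ((x - b) / a)) / F0 * (Real.log (((1/a) * f ((x - b) / a)) / F0))^2)
        = ∫ x in (0:ℝ)..t, (1/a/F0) * (f ((x-b)/a) * (Real.log (f ((x-b)/a)))^2
            - 2*K1*(f ((x-b)/a) * Real.log (f ((x-b)/a))) + K1^2*(f ((x-b)/a))) := by
          refine intervalIntegral.integral_congr fun x _ => ?_
          have := logsq_expand (1/a) F0 (f ((x-b)/a)) ha1 hFpos
          rw [this]
      _ = (1/a/F0) * ∫ x in (0:ℝ)..t, (f ((x-b)/a) * (Real.log (f ((x-b)/a)))^2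
            - 2*K1*(f ((x-b)/a) * Real.log (f ((x-b)/a))) + K1^2*(f ((x-b)/a))) :=
          intervalIntegral.integral_const_mul _ _
      _ = (1/a/F0) * (a * (A - 2*K1*B + K1^2*F0)) := by rw [this, keyval2 K1]
  have e1 : (∫ x in (0:ℝ)..t,
      ((1/a) * f ((x - b) / a)) / F0 * Real.log (((1/a) * f ((x - b) / a)) / F0))
      = (1/a/F0) * (a * (B - K1*F0)) := by
    have := transfer (fun y => f y * Real.log (f y) - K1*(f y))
      (fun y hy => by simp [hf0 y hy]) (keyint1 K1)
    calc (∫ x in (0:ℝ)..t,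
        ((1/a) * f ((x - b) / a)) / F0 * Real.log (((1/a) * f ((x - b) / a)) / F0))
        = ∫ x in (0:ℝ)..t, (1/a/F0) * (f ((x-b)/a) * Real.log (f ((x-b)/a))
            - K1*(f ((x-b)/a))) := by
          refine intervalIntegral.integral_congr fun x _ => ?_
          have := logone_expand (1/a) F0 (f ((x-b)/a)) ha1 hFpos
          rw [this]
      _ = (1/a/F0) * ∫ x in (0:ℝ)..t, (f ((x-b)/a) * Real.log (f ((x-b)/a))
            - K1*(f ((x-b)/a))) := intervalIntegral.integral_const_mul _ _
      _ = (1/a/F0) * (a * (B - K1*F0)) := by rw [this, keyval1 K1]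
  -- rewrite RHS integrals
  have r2 : (∫ x in (0:ℝ)..s, f x / F0 * (Real.log (f x / F0))^2)
      = (1/F0) * (A - 2*K0*B + K0^2*F0) := by
    calc (∫ x in (0:ℝ)..s, f x / F0 * (Real.log (f x / F0))^2)
        = ∫ x in (0:ℝ)..s, (1/F0) * (f x * (Real.log (f x))^2
            - 2*K0*(f x * Real.log (f x)) + K0^2*(f x)) := by
          refine intervalIntegral.integral_congr fun x _ => ?_
          have := logsq_expand 1 F0 (f x) one_pos hFpos
          rw [one_mul] at this
          rw [this]
      _ = (1/F0) * ∫ x in (0:ℝ)..s, (f x * (Real.log (f x))^2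
            - 2*K0*(f x * Real.log (f x)) + K0^2*(f x)) :=
          intervalIntegral.integral_const_mul _ _
      _ = (1/F0) * (A - 2*K0*B + K0^2*F0) := by rw [keyval2 K0]
  have r1 : (∫ x in (0:ℝ)..s, f x / F0 * Real.log (f x / F0))
      = (1/F0) * (B - K0*F0) := by
    calc (∫ x in (0:ℝ)..s, f x / F0 * Real.log (f x / F0))
        = ∫ x in (0:ℝ)..s, (1/F0) * (f x * Real.log (f x) - K0*(f x)) := by
          refine intervalIntegral.integral_congr fun x _ => ?_
          have := logone_expand 1 F0 (f x) one_pos hFpos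
          rw [one_mul] at this
          rw [this]
      _ = (1/F0) * ∫ x in (0:ℝ)..s, (f x * Real.log (f x) - K0*(f x)) :=
          intervalIntegral.integral_const_mul _ _
      _ = (1/F0) * (B - K0*F0) := by rw [keyval1 K0]
  rw [e2, e1, r2, r1]
  have hF0ne : F0 ≠ 0 := hFpos.ne'
  field_simp
  ring
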